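/- arXiv:1303.5942 — 3 statements merged into one kernel-verified Lean document; each statement's English description precedes it below -/
import Mathlib

section
/- For all integers k ≥ 1 and n ≥ 1, −log₂((1 + 2^{-k})^{1/n} − 1) ≤ k + log₂ n + 1/(2 log 2). -/
open Real

theorem stmt_9 (k n : ℕ) (hk : 1 ≤ k) (hn : 1 ≤ n) :
    -Real.logb 2 ((1 + (2:ℝ)^(-(k:ℝ)))^((1:ℝ)/(n:ℝ)) - 1) ≤
      (k : ℝ) + Real.logb 2 n + 1/(2 * Real.log 2) := by
  have hn0 : (0:ℝ) < n := by exact_mod_cast hn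
  set t : ℝ := (2:ℝ)^(-(k:ℝ)) with ht
  have ht0 : 0 < t := rpow_pos_of_pos (by norm_num) _
  have ht_le : t ≤ 1/2 := by
    rw [ht, show (1:ℝ)/2 = (2:ℝ)^(-(1:ℝ)) by rw [rpow_neg_one]; norm_num]
    apply rpow_le_rpow_of_exponent_le (by norm_num)
    simp only [neg_le_neg_iff]; exact_mod_cast hk
  have h1t : (0:ℝ) < 1 + t := by linarith
  -- log(1+t) ≥ t/(1+t)
  have hlog : t/(1+t) ≤ Real.log (1+t) := by
    have h := Real.one_sub_inv_le_log_of_pos h1t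
    have h2 : 1 - (1+t)⁻¹ = t/(1+t) := by field_simp; ring
    linarith [h2 ▸ h]
  -- e^{-1/2} ≤ 2/3 ≤ 1/(1+t)
  have hexp : Real.exp (-(1/2)) ≤ 2/3 := by
    rw [Real.exp_neg]
    rw [inv_le_comm₀ (Real.exp_pos _) (by norm_num)]
    calc (2/3 : ℝ)⁻¹ = 1/2 + 1 := by norm_num
    _ ≤ Real.exp (1/2) := Real.add_one_le_exp _
  have hkey : t * Real.exp (-(1/2)) / n ≤ (1 + t)^((1:ℝ)/(n:ℝ)) - 1 := by
    have hrw : (1 + t)^((1:ℝ)/(n:ℝ)) = Real.exp ((1/(n:ℝ)) * Real.log (1+t)) := by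
      rw [rpow_def_of_pos h1t, mul_comm]
    have h1 : (1/(n:ℝ)) * Real.log (1+t) + 1 ≤ (1 + t)^((1:ℝ)/(n:ℝ)) := by
      rw [hrw]; exact Real.add_one_le_exp _
    have h2 : t * Real.exp (-(1/2)) ≤ t/(1+t) := by
      rw [div_eq_mul_inv]
      apply mul_le_mul_of_nonneg_left _ ht0.le
      calc Real.exp (-(1/2)) ≤ 2/3 := hexp
      _ ≤ (1+t)⁻¹ := by
          rw [le_inv_comm₀ (by norm_num) h1t]; linarith
    have h3 : t * Real.exp (-(1/2)) / n ≤ (1/(n:ℝ)) * Real.log (1+t) := by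
      rw [div_le_iff₀ hn0] at *
      calc t * Real.exp (-(1/2)) ≤ t/(1+t) := h2
      _ ≤ Real.log (1+t) := hlog
      _ = (1/(n:ℝ)) * Real.log (1+t) * n := by field_simp
    linarith
  have hpos : (0:ℝ) < t * Real.exp (-(1/2)) / n := by positivity
  have hmono : Real.logb 2 (t * Real.exp (-(1/2)) / n) ≤
      Real.logb 2 ((1 + t)^((1:ℝ)/(n:ℝ)) - 1) :=
    Real.logb_le_logb_of_le (by norm_num) hpos hkey
  have hcalc : Real.logb 2 (t * Real.exp (-(1/2)) / n) =
      -(k:ℝ) - 1/(2 * Real.log 2) - Real.logb 2 n := by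
    rw [Real.logb_div (by positivity) (by positivity),
        Real.logb_mul (ne_of_gt ht0) (ne_of_gt (Real.exp_pos _)), ht,
        Real.logb_rpow (by norm_num) (by norm_num)]
    have : Real.logb 2 (Real.exp (-(1/2))) = -(1/(2 * Real.log 2)) := by
      rw [Real.logb, Real.log_exp]
      field_simp

    rw [this]; ring
  rw [hcalc] at hmono
  linarith
end

section
/- Let U be uniformly distributed on [0,1), let p ∈ [0,1], and for each k let U(k) = ⌊U·2^k⌋/2^k and let p(k) satisfy |p(k) − p| ≤ 2^{-k}. Then for every k, P(|U(k) − p(k)| ≤ 2/2^k) ≤ P(|U − p| ≤ 4/2^k) ≤ 8/2^k. -/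
open MeasureTheory
open scoped ProbabilityTheory

theorem stmt_10 {Ω : Type*} [MeasureSpace Ω] [IsProbabilityMeasure (ℙ : Measure Ω)]
    (U : Ω → ℝ) (hU : Measure.map U ℙ = volume.restrict (Set.Ico (0:ℝ) 1))
    (p : ℝ) (hp : p ∈ Set.Icc (0:ℝ) 1) (k : ℕ)
    (pk : ℝ) (hpk : |pk - p| ≤ 1/2^k) :
    ℙ {ω | |(⌊U ω * 2^k⌋ : ℝ)/2^k - pk| ≤ 2/2^k} ≤ ℙ {ω | |U ω - p| ≤ 4/2^k} ∧
    ℙ {ω | |U ω - p| ≤ 4/2^k} ≤ ENNReal.ofReal (8/2^k) := by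
  have hUm : AEMeasurable U ℙ := by
    by_contra h
    rw [Measure.map_of_not_aemeasurable h] at hU
    have : (volume.restrict (Set.Ico (0:ℝ) 1)) (Set.Ico (0:ℝ) 1) = 0 := by
      rw [← hU]; simp
    rw [Measure.restrict_apply_self, Real.volume_Ico] at this
    simp at this
  have h2k : (0:ℝ) < 2^k := by positivity
  constructor
  · apply measure_mono
    intro ω hω
    simp only [Set.mem_setOf_eq] at hω ⊢
    have hfl : 0 ≤ U ω - (⌊U ω * 2^k⌋ : ℝ)/2^k ∧ U ω - (⌊U ω * 2^k⌋ : ℝ)/2^k < 1/2^k := by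
      constructor
      · have := Int.floor_le (U ω * 2^k)
        rw [sub_nonneg, div_le_iff₀ h2k]; linarith
      · have := Int.lt_floor_add_one (U ω * 2^k)
        rw [sub_lt_iff_lt_add, ← add_div, lt_div_iff₀ h2k]
        push_cast; linarith
    have h1 : |U ω - (⌊U ω * 2^k⌋ : ℝ)/2^k| ≤ 1/2^k := by
      rw [abs_le]; constructor <;> [linarith [hfl.1, one_div_pos.mpr h2k]; linarith [hfl.2]]
    calc |U ω - p| = |(U ω - (⌊U ω * 2^k⌋ : ℝ)/2^k) + ((⌊U ω * 2^k⌋ : ℝ)/2^k - pk) + (pk - p)| := by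
          ring_nf
      _ ≤ |U ω - (⌊U ω * 2^k⌋ : ℝ)/2^k| + |(⌊U ω * 2^k⌋ : ℝ)/2^k - pk| + |pk - p| := abs_add_three _ _ _
      _ ≤ 1/2^k + 2/2^k + 1/2^k := by gcongr
      _ = 4/2^k := by ring
  · have hset : {ω | |U ω - p| ≤ 4/2^k} = U ⁻¹' (Set.Icc (p - 4/2^k) (p + 4/2^k)) := by
      ext ω
      simp only [Set.mem_setOf_eq, Set.mem_preimage, Set.mem_Icc, abs_le]
      constructor <;> intro h <;> constructor <;> linarith [h.1, h.2]
    rw [hset, ← Measure.map_apply_of_aemeasurable hUm measurableSet_Icc, hU]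
    calc (volume.restrict (Set.Ico (0:ℝ) 1)) (Set.Icc (p - 4/2^k) (p + 4/2^k))
        ≤ volume (Set.Icc (p - 4/2^k) (p + 4/2^k)) := Measure.restrict_le_self _
      _ = ENNReal.ofReal (8/2^k) := by
          rw [Real.volume_Icc]; congr 1; ring
end

section
/- In the equatorial case φ_j = 0 for all j, for b ∈ {-1,+1}^n, p(b) = cos²(θ/2)·p1(b) + sin²(θ/2)·p2(b) with a1(b)² = a2(b)² = 2^{-n}, and the expectation of the product ∏_j b_j under p equals cos(∑_{j=1}^n θ_j). -/
open Real Finset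

theorem stmt_19 (n : ℕ) (hn : 1 ≤ n) (θ : Fin n → ℝ)
    (b : (Fin n → Bool) → Fin n → ℝ)
    (hb : ∀ s j, b s j = if s j then 1 else -1)
    (a1 a2 p : (Fin n → Bool) → ℝ)
    (ha1 : ∀ s, a1 s = ∏ j, Real.cos ((0 - (π/2) * b s j)/2))
    (ha2 : ∀ s, a2 s = ∏ j, (-Real.sin ((0 - (π/2) * b s j)/2)))
    (hp : ∀ s, p s = Real.cos ((∑ j, θ j)/2)^2 * ((1/2) * (a1 s + a2 s)^2) +
                     Real.sin ((∑ j, θ j)/2)^2 * ((1/2) * (a1 s - a2 s)^2)) :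
    (∀ s, (a1 s)^2 = 1/2^n ∧ (a2 s)^2 = 1/2^n ∧
      p s = (1/2^n) * (1 + Real.cos (∑ j, θ j) * ∏ j, b s j)) ∧
    ∑ s : Fin n → Bool, p s * ∏ j, b s j = Real.cos (∑ j, θ j) := by
  set θS := ∑ j, θ j with hθS
  have hc2 : (Real.sqrt 2 / 2)^2 = 1/2 := by
    rw [div_pow, Real.sq_sqrt (by norm_num : (0:ℝ) ≤ 2)]; norm_num
  have ha1' : ∀ s, a1 s = (Real.sqrt 2 / 2)^n := by
    intro s
    rw [ha1, show ((Real.sqrt 2/2):ℝ)^n = ∏ _j : Fin n, (Real.sqrt 2 / 2) from by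
      rw [Finset.prod_const, Finset.card_univ, Fintype.card_fin]]
    apply Finset.prod_congr rfl
    intro j _
    rw [hb]
    cases h : s j <;> simp only [Bool.false_eq_true, if_false, if_true]
    · have : (0 - (π/2) * (-1))/2 = π/4 := by ring
      rw [this, Real.cos_pi_div_four]
    · have : (0 - (π/2) * 1)/2 = -(π/4) := by ring
      rw [this, Real.cos_neg, Real.cos_pi_div_four]
  have ha2' : ∀ s, a2 s = (∏ j, b s j) * (Real.sqrt 2 / 2)^n := by
    intro s
    rw [ha2, show ((Real.sqrt 2/2):ℝ)^n = ∏ _j : Fin n, (Real.sqrt 2 / 2) from by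
      rw [Finset.prod_const, Finset.card_univ, Fintype.card_fin], ← Finset.prod_mul_distrib]
    apply Finset.prod_congr rfl
    intro j _
    rw [hb]
    cases h : s j <;> simp only [Bool.false_eq_true, if_false, if_true]
    · have : (0 - (π/2) * (-1))/2 = π/4 := by ring
      rw [this, Real.sin_pi_div_four]; ring
    · have : (0 - (π/2) * 1)/2 = -(π/4) := by ring
      rw [this, Real.sin_neg, Real.sin_pi_div_four]; ring
  have hcn : ((Real.sqrt 2 / 2)^n)^2 = 1/2^n := by
    rw [← pow_mul, mul_comm n 2, pow_mul, hc2, div_pow, one_pow]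
  have hP2 : ∀ s, (∏ j, b s j)^2 = 1 := by
    intro s
    rw [← Finset.prod_pow]
    apply Finset.prod_eq_one
    intro j _
    rw [hb]; cases s j <;> norm_num
  have htrig : Real.cos θS = 2 * Real.cos (θS/2)^2 - 1 := by
    have h2 : θS = 2 * (θS/2) := by ring
    conv_lhs => rw [h2]
    rw [Real.cos_two_mul]
  have hsin : Real.sin (θS/2)^2 = 1 - Real.cos (θS/2)^2 := by
    have := Real.sin_sq_add_cos_sq (θS/2); linarith
  have hmain : ∀ s, p s = (1/2^n) * (1 + Real.cos θS * ∏ j, b s j) := by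
    intro s
    rw [hp s, ha1' s, ha2' s, hsin, htrig]
    set P := ∏ j, b s j
    set c := (Real.sqrt 2 / 2)^n
    have h1 : P^2 = 1 := hP2 s
    have h2 : c^2 = 1/2^n := hcn
    linear_combination (Real.cos (θS/2)^2 * (1/2) * c^2 + (1 - Real.cos (θS/2)^2) * (1/2) * c^2) * h1 + (1 + (2*Real.cos (θS/2)^2 - 1) * P) * h2
  refine ⟨fun s => ⟨by rw [ha1' s, hcn], ?_, hmain s⟩, ?_⟩
  · rw [ha2' s, mul_pow, hP2 s, hcn, one_mul]
  · have hsum0 : ∑ s : Fin n → Bool, ∏ j, b s j = 0 := by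
      have hkey := Finset.prod_univ_sum (fun _ : Fin n => (Finset.univ : Finset Bool))
        (fun _ t => (if t then (1:ℝ) else -1))
      simp only [Fintype.piFinset_univ] at hkey
      have hl : ∀ i : Fin n, ∑ t : Bool, (if t then (1:ℝ) else -1) = 0 := by
        intro i; simp
      calc ∑ s : Fin n → Bool, ∏ j, b s j
          = ∑ s : Fin n → Bool, ∏ j, (if s j then (1:ℝ) else -1) := by
            apply Finset.sum_congr rfl; intro s _
            exact Finset.prod_congr rfl fun j _ => hb s j
        _ = ∏ i : Fin n, ∑ t : Bool, (if t then (1:ℝ) else -1) := hkey.symm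
        _ = 0 := by
            rw [Finset.prod_eq_zero (Finset.mem_univ ⟨0, hn⟩)]
            simp
    calc ∑ s : Fin n → Bool, p s * ∏ j, b s j
        = ∑ s : Fin n → Bool, ((1/2^n) * (∏ j, b s j) + (1/2^n) * Real.cos θS * (∏ j, b s j)^2) := by
          apply Finset.sum_congr rfl; intro s _
          rw [hmain s]; ring
      _ = ∑ s : Fin n → Bool, ((1/2^n) * (∏ j, b s j) + (1/2^n) * Real.cos θS) := by
          apply Finset.sum_congr rfl; intro s _
          rw [hP2 s]; ring
      _ = Real.cos θS := by
          rw [Finset.sum_add_distrib, ← Finset.mul_sum, hsum0, Finset.sum_const]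
          have hcard : Fintype.card (Fin n → Bool) = 2^n := by
            simp [Fintype.card_fun]
          rw [Finset.card_univ, hcard]
          have h2n : (2:ℝ)^n ≠ 0 := by positivity
          simp only [nsmul_eq_mul, Nat.cast_pow, Nat.cast_ofNat]
          field_simp
          ring
end
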